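/- arXiv:1908.06786 — 5 statements merged into one kernel-verified Lean document; each statement's English description precedes it below -/
import Mathlib

section
/- For all λ > 0 and r ∈ (0,1), λ^r = (r/Γ(1-r)) ∫_0^∞ (1 - e^{-λx}) x^{-r-1} dx. -/
open Real MeasureTheory

open Set Filter

/-- For all λ > 0 and r ∈ (0,1), λ^r = (r/Γ(1-r)) ∫_0^∞ (1 - e^{-λx}) x^{-r-1} dx. -/
theorem stmt1 (l r : ℝ) (hl : 0 < l) (hr0 : 0 < r) (hr1 : r < 1) :
    l ^ r = (r / Real.Gamma (1 - r)) *
      ∫ x in Set.Ioi (0 : ℝ), (1 - Real.exp (-l * x)) * x ^ (-r - 1) := by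
  have hrne : r ≠ 0 := ne_of_gt hr0
  set G : ℝ → ℝ := fun x => (1 - exp (-l * x)) * x ^ (-r - 1) with hG
  set H : ℝ → ℝ := fun x => x ^ (-r) * exp (-(l * x)) with hHdef
  set F : ℝ → ℝ := fun x => (1 - exp (-l * x)) * x ^ (-r) / (-r) with hF
  -- integrability of H
  have hHint : IntegrableOn H (Ioi 0) := by
    have := integrableOn_rpow_mul_exp_neg_mul_rpow (p := 1) (s := -r) (b := l)
      (by linarith) one_pos hl
    refine this.congr_fun (fun x hx => ?_) measurableSet_Ioi
    simp [hHdef, Real.rpow_one]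
  -- integrability of G
  have hGmeas : Measurable G := by
    have m1 : Measurable fun x : ℝ => x ^ (-r - 1) := by measurability
    exact ((Real.measurable_exp.comp (measurable_id.const_mul (-l))).const_sub 1).mul m1
  have hGbound1 : ∀ x : ℝ, 0 < x → 0 ≤ 1 - exp (-l * x) ∧ 1 - exp (-l * x) ≤ l * x := by
    intro x hx
    constructor
    · have : exp (-l * x) ≤ 1 := by
        rw [Real.exp_le_one_iff]; nlinarith
      linarith
    · have := Real.add_one_le_exp (-l * x)
      nlinarith
  have hGint : IntegrableOn G (Ioi 0) := by
    rw [← Ioc_union_Ioi_eq_Ioi (zero_le_one)]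
    rw [integrableOn_union]
    constructor
    · have hint : IntegrableOn (fun x : ℝ => l * x ^ (-r)) (Ioc 0 1) := by
        refine Integrable.const_mul ?_ _
        exact (intervalIntegrable_iff_integrableOn_Ioc_of_le zero_le_one).mp
          (intervalIntegral.intervalIntegrable_rpow' (by linarith))
      refine Integrable.mono' hint hGmeas.aestronglyMeasurable ?_
      refine eventually_of_mem (self_mem_ae_restrict measurableSet_Ioc) (fun x hx => ?_)
      obtain ⟨h0, hle⟩ := hGbound1 x hx.1
      have hxp : (0:ℝ) < x := hx.1
      have hnn : 0 ≤ x ^ (-r - 1) := (rpow_pos_of_pos hxp _).le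
      rw [hG]
      rw [Real.norm_of_nonneg (mul_nonneg h0 hnn)]
      calc (1 - exp (-l * x)) * x ^ (-r - 1) ≤ (l * x) * x ^ (-r - 1) := by
            exact mul_le_mul_of_nonneg_right hle hnn
        _ = l * x ^ (-r) := by
            rw [mul_assoc]
            congr 1
            rw [Real.rpow_sub hxp, Real.rpow_one]
            field_simp
    · have hint : IntegrableOn (fun x : ℝ => x ^ (-r - 1)) (Ioi 1) :=
        integrableOn_Ioi_rpow_of_lt (by linarith) one_pos
      refine Integrable.mono' hint hGmeas.aestronglyMeasurable ?_
      refine eventually_of_mem (self_mem_ae_restrict measurableSet_Ioi) (fun x hx => ?_)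
      have hxp : (0:ℝ) < x := lt_trans one_pos hx
      obtain ⟨h0, _⟩ := hGbound1 x hxp
      have hnn : 0 ≤ x ^ (-r - 1) := (rpow_pos_of_pos hxp _).le
      rw [hG, Real.norm_of_nonneg (mul_nonneg h0 hnn)]
      nlinarith [Real.exp_pos (-l * x)]
  -- derivative
  have hderiv : ∀ x ∈ Ioi (0:ℝ), HasDerivAt F (G x - (l / r) * H x) x := by
    intro x hx
    have hxp : (0:ℝ) < x := hx
    have h1 : HasDerivAt (fun x : ℝ => 1 - exp (-l * x)) (l * exp (-l * x)) x := by
      have h0 : HasDerivAt (fun x : ℝ => -l * x) (-l) x := by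
        simpa using (hasDerivAt_id x).const_mul (-l)
      have := (h0.exp).const_sub 1
      refine this.congr_deriv ?_
      ring
    have h2 : HasDerivAt (fun x : ℝ => x ^ (-r)) (-r * x ^ (-r - 1)) x :=
      Real.hasDerivAt_rpow_const (Or.inl (ne_of_gt hxp))
    have hd := (h1.mul h2).div_const (-r)
    refine hd.congr_deriv ?_
    symm
    rw [hG, hHdef]
    simp only [neg_mul]
    rw [eq_div_iff (neg_ne_zero.mpr hrne)]
    field_simp
    ring
  -- F tendsto 0 at top
  have htop : Tendsto F atTop (nhds 0) := by
    have he : Tendsto (fun x : ℝ => exp (-l * x)) atTop (nhds 0) := by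
      have : Tendsto (fun x : ℝ => -l * x) atTop atBot :=
        Tendsto.const_mul_atTop_of_neg (neg_neg_iff_pos.mpr hl) tendsto_id
      exact Real.tendsto_exp_atBot.comp this
    have h := (((tendsto_const_nhds (x := (1:ℝ))).sub he).mul (tendsto_rpow_neg_atTop hr0)).div_const (-r)
    rw [hF]
    simpa [neg_mul] using h
  -- continuity at 0 from the right
  have hF0 : F 0 = 0 := by
    simp [hF]
  have hcont : ContinuousWithinAt F (Ici (0:ℝ)) 0 := by
    rw [ContinuousWithinAt, hF0]
    have hbnd : Tendsto (fun x : ℝ => (l / r) * x ^ (1 - r)) (nhdsWithin 0 (Ici 0)) (nhds 0) := by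
      have hc : ContinuousAt (fun x : ℝ => x ^ (1 - r)) 0 :=
        Real.continuousAt_rpow_const 0 (1 - r) (Or.inr (by linarith))
      have := (hc.continuousWithinAt (s := Ici 0)).tendsto.const_mul (l / r)
      simpa [Real.zero_rpow (show (1:ℝ) - r ≠ 0 by linarith)] using this
    refine squeeze_zero_norm' ?_ hbnd
    refine eventually_of_mem self_mem_nhdsWithin (fun x hx => ?_)
    rcases eq_or_lt_of_le (Set.mem_Ici.mp hx) with h | h
    · rw [← h, hF0]
      simp [Real.zero_rpow (show (1:ℝ) - r ≠ 0 by linarith)]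
    · obtain ⟨h0, hle⟩ := hGbound1 x h
      have hnn : 0 ≤ x ^ (-r) := (rpow_pos_of_pos h _).le
      rw [hF]
      have hnorm : ‖(1 - exp (-l * x)) * x ^ (-r) / (-r)‖ =
          (1 - exp (-l * x)) * x ^ (-r) / r := by
        rw [norm_div, Real.norm_of_nonneg (mul_nonneg h0 hnn)]
        rw [norm_neg, Real.norm_of_nonneg hr0.le]
      rw [hnorm]
      have hxx : x * x ^ (-r) = x ^ (1 - r) := by
        rw [Real.rpow_sub h, Real.rpow_one, Real.rpow_neg h.le, div_eq_mul_inv]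
      calc (1 - exp (-l * x)) * x ^ (-r) / r ≤ (l * x) * x ^ (-r) / r := by
            gcongr
        _ = l / r * x ^ (1 - r) := by
            rw [mul_assoc, hxx]; ring
  -- FTC
  have hf'int : IntegrableOn (fun x => G x - (l / r) * H x) (Ioi 0) :=
    hGint.sub (hHint.const_mul _)
  have hFTC := integral_Ioi_of_hasDerivAt_of_tendsto hcont hderiv hf'int htop
  rw [hF0, sub_zero] at hFTC
  -- split the integral
  have hsplit : ∫ x in Ioi (0:ℝ), G x =
      (∫ x in Ioi (0:ℝ), (G x - (l / r) * H x)) + (l / r) * ∫ x in Ioi (0:ℝ), H x := by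
    rw [← integral_const_mul, ← integral_add hf'int (hHint.const_mul _)]
    congr 1
    ext x
    ring
  have hHval : ∫ x in Ioi (0:ℝ), H x = (1 / l) ^ (1 - r) * Gamma (1 - r) := by
    have := integral_rpow_mul_exp_neg_mul_Ioi (a := 1 - r) (r := l) (by linarith) hl
    rw [← this]
    apply setIntegral_congr_fun measurableSet_Ioi
    intro x hx
    rw [hHdef]
    norm_num
  rw [hFTC, hHval, zero_add] at hsplit
  have hΓpos : 0 < Gamma (1 - r) := Real.Gamma_pos_of_pos (by linarith)
  rw [hsplit]
  have hinv : (1 / l) ^ (1 - r) = l ^ (r - 1) := by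
    rw [one_div, Real.inv_rpow hl.le, ← Real.rpow_neg hl.le]
    congr 1
    ring
  have hmul : l * l ^ (r - 1) = l ^ r := by
    have h := Real.rpow_add hl 1 (r - 1)
    rw [show (1:ℝ) + (r - 1) = r by ring, Real.rpow_one] at h
    exact h.symm
  rw [hinv]
  have hfinal : r / Gamma (1 - r) * (l / r * (l ^ (r - 1) * Gamma (1 - r))) =
      l * l ^ (r - 1) := by
    field_simp
  rw [hfinal, hmul]
end

section
/- Let μ be a probability measure on [0,∞) whose Laplace transform satisfies ∫_0^∞ e^{-xs} μ(ds) = e^{-t x^α} for all x > 0, where t > 0 and 0 < α < 1. Then for every r > 0, ∫_0^∞ s^{-r} μ(ds) = t^{-r/α} · Γ(1 + r/α) / Γ(1 + r). -/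
open Real MeasureTheory Set
open scoped ENNReal

lemma aux_integrableOn {q b p : ℝ} (hq : -1 < q) (hp : 0 < p) (hb : 0 < b) :
    IntegrableOn (fun x : ℝ => x ^ q * Real.exp (-b * x ^ p)) (Ioi 0) := by
  have h1 : IntegrableOn
      (fun y : ℝ => y ^ ((q + 1) / p - 1) * Real.exp (-b * y ^ (1 : ℝ))) (Ioi 0) := by
    refine integrableOn_rpow_mul_exp_neg_mul_rpow ?_ one_pos hb
    have : 0 < (q + 1) / p := div_pos (by linarith) hp
    linarith
  have h2 := (integrableOn_Ioi_comp_rpow_iff'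
      (fun y : ℝ => y ^ ((q + 1) / p - 1) * Real.exp (-b * y ^ (1 : ℝ))) (ne_of_gt hp)).2 h1
  refine h2.congr_fun (fun x hx => ?_) measurableSet_Ioi
  have hx0 : (0 : ℝ) < x := hx
  dsimp only
  rw [smul_eq_mul, Real.rpow_one, ← Real.rpow_mul hx0.le, ← mul_assoc,
    ← Real.rpow_add hx0]
  congr 2
  field_simp
  ring

lemma aux_meas (r : ℝ) :
    Measurable (fun p : ℝ × ℝ => ENNReal.ofReal (p.2 ^ (r - 1) * Real.exp (-p.2 * p.1))) := by
  measurability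

/-- Negative moments of the time-t law of an α-stable subordinator. -/
theorem stmt2 (α t : ℝ) (hα : 0 < α) (hα1 : α < 1) (ht : 0 < t)
    (μ : Measure ℝ) [IsProbabilityMeasure μ] (hsupp : μ (Set.Iic 0) = 0)
    (hlap : ∀ x : ℝ, 0 < x → ∫ s, Real.exp (-x * s) ∂μ = Real.exp (-t * x ^ α))
    (r : ℝ) (hr : 0 < r) :
    ∫ s, s ^ (-r) ∂μ = t ^ (-r / α) * (Real.Gamma (1 + r / α) / Real.Gamma (1 + r)) := by
  have hpos : ∀ᵐ s ∂μ, 0 < s := by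
    rw [ae_iff]
    refine measure_mono_null (fun s hs => ?_) hsupp
    simpa using not_lt.mp hs
  have hΓr : 0 < Real.Gamma r := Real.Gamma_pos_of_pos hr
  -- inner Gamma representation: for s > 0,
  have hrep : ∀ s : ℝ, 0 < s →
      ∫ x in Ioi (0:ℝ), x ^ (r - 1) * Real.exp (-x * s) = s ^ (-r) * Real.Gamma r := by
    intro s hs
    have h := integral_rpow_mul_exp_neg_mul_rpow (p := 1) (q := r - 1) (b := s)
      one_pos (by linarith) hs
    simp only [Real.rpow_one, sub_add_cancel, div_one, one_div, inv_one, mul_one] at h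
    rw [← h]
    refine setIntegral_congr_fun measurableSet_Ioi (fun x hx => ?_)
    ring_nf
  have hirep : ∀ s : ℝ, 0 < s →
      IntegrableOn (fun x : ℝ => x ^ (r - 1) * Real.exp (-x * s)) (Ioi 0) := by
    intro s hs
    have := aux_integrableOn (q := r - 1) (b := s) (p := 1) (by linarith) one_pos hs
    refine this.congr_fun (fun x hx => ?_) measurableSet_Ioi
    dsimp only
    rw [Real.rpow_one]; ring_nf
  -- the key double lintegral
  set J : ℝ≥0∞ := ∫⁻ s, ∫⁻ x in Ioi (0:ℝ),
      ENNReal.ofReal (x ^ (r - 1) * Real.exp (-x * s)) ∂volume ∂μ with hJ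
  -- J = Gamma r • ∫⁻ ofReal (s ^ (-r))
  have hJ1 : J = ENNReal.ofReal (Real.Gamma r) * ∫⁻ s, ENNReal.ofReal (s ^ (-r)) ∂μ := by
    rw [← lintegral_const_mul' _ _ ENNReal.ofReal_ne_top]
    refine lintegral_congr_ae (hpos.mono fun s hs => ?_)
    dsimp only
    rw [← ofReal_integral_eq_lintegral_ofReal (hirep s hs)
      ((ae_restrict_iff' measurableSet_Ioi).2 (Filter.Eventually.of_forall fun x hx => by
        have hx0 : (0:ℝ) < x := hx
        positivity)), hrep s hs, ← ENNReal.ofReal_mul hΓr.le, mul_comm]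
  -- Tonelli swap
  have hswap : J = ∫⁻ x in Ioi (0:ℝ), ∫⁻ s, ENNReal.ofReal
      (x ^ (r - 1) * Real.exp (-x * s)) ∂μ ∂volume := by
    rw [hJ]
    exact lintegral_lintegral_swap (aux_meas r).aemeasurable
  -- inner μ-integral for x > 0
  have hinner : ∀ x : ℝ, x ∈ Ioi (0:ℝ) →
      ∫⁻ s, ENNReal.ofReal (x ^ (r - 1) * Real.exp (-x * s)) ∂μ
        = ENNReal.ofReal (x ^ (r - 1) * Real.exp (-t * x ^ α)) := by
    intro x hx
    have hx0 : (0:ℝ) < x := hx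
    have hint : Integrable (fun s : ℝ => Real.exp (-x * s)) μ := by
      refine Integrable.mono' (integrable_const 1) ((measurable_id.const_mul (-x)).exp.aestronglyMeasurable) ?_
      refine hpos.mono fun s hs => ?_
      rw [Real.norm_eq_abs, abs_of_pos (Real.exp_pos _)]
      exact Real.exp_le_one_iff.mpr (by nlinarith)
    calc ∫⁻ s, ENNReal.ofReal (x ^ (r - 1) * Real.exp (-x * s)) ∂μ
        = ∫⁻ s, ENNReal.ofReal (x ^ (r - 1)) * ENNReal.ofReal (Real.exp (-x * s)) ∂μ := by
          refine lintegral_congr fun s => ?_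
          rw [ENNReal.ofReal_mul (by positivity)]
      _ = ENNReal.ofReal (x ^ (r - 1)) * ∫⁻ s, ENNReal.ofReal (Real.exp (-x * s)) ∂μ :=
          lintegral_const_mul' _ _ ENNReal.ofReal_ne_top
      _ = ENNReal.ofReal (x ^ (r - 1)) * ENNReal.ofReal (Real.exp (-t * x ^ α)) := by
          rw [← ofReal_integral_eq_lintegral_ofReal hint
            (Filter.Eventually.of_forall fun s => (Real.exp_pos _).le), hlap x hx0]
      _ = ENNReal.ofReal (x ^ (r - 1) * Real.exp (-t * x ^ α)) := by
          rw [← ENNReal.ofReal_mul (by positivity)]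
  -- evaluate J
  have hval : J = ENNReal.ofReal (t ^ (-r / α) * (1 / α) * Real.Gamma (r / α)) := by
    rw [hswap, setLIntegral_congr_fun measurableSet_Ioi
      hinner,
      ← ofReal_integral_eq_lintegral_ofReal
        (aux_integrableOn (q := r - 1) (by linarith) hα ht)
        ((ae_restrict_iff' measurableSet_Ioi).2 (Filter.Eventually.of_forall fun x hx => by
          have hx0 : (0:ℝ) < x := hx
          positivity)),
      integral_rpow_mul_exp_neg_mul_rpow hα (by linarith) ht]
    norm_num
  -- convert target Bochner integral to lintegral
  have hmeas2 : AEStronglyMeasurable (fun s : ℝ => s ^ (-r)) μ := by measurability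
  rw [integral_eq_lintegral_of_nonneg_ae
    (hpos.mono fun s hs => Real.rpow_nonneg hs.le _) hmeas2]
  have hI : ∫⁻ s, ENNReal.ofReal (s ^ (-r)) ∂μ
      = ENNReal.ofReal (t ^ (-r / α) * (1 / α) * Real.Gamma (r / α) / Real.Gamma r) := by
    have h0 : ENNReal.ofReal (Real.Gamma r) ≠ 0 := by
      simp [ENNReal.ofReal_eq_zero, not_le, hΓr]
    refine (ENNReal.mul_right_inj h0 ENNReal.ofReal_ne_top).mp ?_
    rw [← hJ1, hval, ← ENNReal.ofReal_mul hΓr.le, mul_div_cancel₀ _ (ne_of_gt hΓr)]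
  rw [hI, ENNReal.toReal_ofReal (by positivity)]
  have hΓrα : 0 < Real.Gamma (r / α) := Real.Gamma_pos_of_pos (by positivity)
  have e1 : Real.Gamma (1 + r / α) = (r / α) * Real.Gamma (r / α) := by
    rw [add_comm]; exact Real.Gamma_add_one (by positivity)
  have e2 : Real.Gamma (1 + r) = r * Real.Gamma r := by
    rw [add_comm]; exact Real.Gamma_add_one (ne_of_gt hr)
  rw [e1, e2]
  field_simp
end

section
/- Let μ be a probability measure on [0,∞) with Laplace transform ∫ e^{-xs} μ(ds) = e^{-t x^α} for x > 0, 0 < α < 1, t > 0. Then for every κ with 0 < κ < α, ∫_0^∞ s^κ μ(ds) = t^{κ/α} · Γ(1 - κ/α) / Γ(1 - κ). -/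
open Real MeasureTheory Set

lemma aux_exp_Ioc (x s : ℝ) (hx : 0 < x) (hs : 0 < s) :
    ∫ u in Set.Ioc (0:ℝ) s, Real.exp (-(x * u)) = (1 - Real.exp (-(x * s))) / x := by
  rw [← intervalIntegral.integral_of_le hs.le]
  have := intervalIntegral.integral_comp_mul_left (a := (0:ℝ)) (b := s)
    (fun y => Real.exp (-y)) (c := x)
  simp only [mul_zero] at this
  rw [this hx.ne', intervalIntegral.integral_comp_neg (fun y => Real.exp y), neg_zero,
    integral_exp, smul_eq_mul, Real.exp_zero]
  field_simp

lemma aux_gamma (κ u : ℝ) (hκ1 : κ < 1) (hu : 0 < u) :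
    ∫ x in Ioi (0:ℝ), x ^ (-κ) * Real.exp (-(x * u)) = Real.Gamma (1 - κ) * u ^ (κ - 1) := by
  have := Real.integral_rpow_mul_exp_neg_mul_Ioi (a := 1 - κ) (r := u) (by linarith) hu
  rw [show (1:ℝ) - κ - 1 = -κ by ring] at this
  simp_rw [mul_comm u] at this
  rw [this, one_div, Real.inv_rpow hu.le, ← Real.rpow_neg hu.le,
    show -(1-κ) = κ-1 by ring, mul_comm]

lemma aux_gamma_int (κ u : ℝ) (hκ1 : κ < 1) (hu : 0 < u) :
    IntegrableOn (fun x : ℝ => x ^ (-κ) * Real.exp (-(x * u))) (Ioi 0) := by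
  have := integrableOn_rpow_mul_exp_neg_mul_rpow (p := 1) (s := -κ) (b := u) (by linarith) one_pos hu
  simp only [Real.rpow_one] at this
  exact this.congr_fun (fun x hx => by dsimp only; rw [neg_mul, mul_comm u x]) measurableSet_Ioi

lemma L2' (κ s : ℝ) (hκ0 : 0 < κ) (hκ1 : κ < 1) (hs : 0 < s) :
    ∫⁻ x in Ioi (0:ℝ), ENNReal.ofReal ((1 - Real.exp (-(x * s))) * x ^ (-κ - 1))
      = ENNReal.ofReal (Real.Gamma (1 - κ) / κ * s ^ κ) := by
  have key : ∀ x ∈ Ioi (0:ℝ), ENNReal.ofReal ((1 - Real.exp (-(x * s))) * x ^ (-κ - 1))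
      = ∫⁻ u in Ioc (0:ℝ) s, ENNReal.ofReal (x ^ (-κ) * Real.exp (-(x * u))) := by
    intro x hx
    rw [← ofReal_integral_eq_lintegral_ofReal]
    · rw [MeasureTheory.integral_const_mul, aux_exp_Ioc x s hx hs]
      congr 1
      rw [show -κ - 1 = -κ - (1:ℝ) from rfl, Real.rpow_sub hx, Real.rpow_one]
      ring
    · exact Continuous.integrableOn_Ioc (by fun_prop)
    · exact Filter.Eventually.of_forall fun u =>
        mul_nonneg (Real.rpow_nonneg (le_of_lt hx) _) (Real.exp_nonneg _)
  rw [setLIntegral_congr_fun measurableSet_Ioi key]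
  rw [lintegral_lintegral_swap (by fun_prop)]
  have key2 : ∀ u ∈ Ioc (0:ℝ) s,
      (∫⁻ x in Ioi (0:ℝ), ENNReal.ofReal (x ^ (-κ) * Real.exp (-(x * u))))
        = ENNReal.ofReal (Real.Gamma (1 - κ) * u ^ (κ - 1)) := by
    intro u hu
    rw [← ofReal_integral_eq_lintegral_ofReal (aux_gamma_int κ u hκ1 hu.1)
      ((ae_restrict_iff' measurableSet_Ioi).2 (Filter.Eventually.of_forall fun x hx =>
        mul_nonneg (Real.rpow_nonneg (le_of_lt hx) _) (Real.exp_nonneg _))),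
      aux_gamma κ u hκ1 hu.1]
  rw [setLIntegral_congr_fun measurableSet_Ioc key2]
  rw [← ofReal_integral_eq_lintegral_ofReal]
  · congr 1
    rw [MeasureTheory.integral_const_mul, ← intervalIntegral.integral_of_le hs.le,
      integral_rpow (Or.inl (by linarith)), show κ - 1 + 1 = κ by ring,
      Real.zero_rpow hκ0.ne']
    ring
  · refine Integrable.const_mul ?_ _
    rw [show (volume.restrict (Ioc (0:ℝ) s)) = volume.restrict (Ioc (0:ℝ) s) from rfl,
      ← IntegrableOn, ← intervalIntegrable_iff_integrableOn_Ioc_of_le hs.le]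
    exact intervalIntegral.intervalIntegrable_rpow' (by linarith)
  · exact (ae_restrict_iff' measurableSet_Ioc).2 (Filter.Eventually.of_forall fun u hu =>
      mul_nonneg (Real.Gamma_pos_of_pos (by linarith)).le (Real.rpow_nonneg (le_of_lt hu.1) _))

lemma L2nonneg (κ s : ℝ) (hs : 0 < s) :
    ∀ᵐ x ∂(volume.restrict (Ioi (0:ℝ))), 0 ≤ (1 - Real.exp (-(x * s))) * x ^ (-κ - 1) := by
  refine (ae_restrict_iff' measurableSet_Ioi).2 (Filter.Eventually.of_forall fun x hx => ?_)
  have h1 : Real.exp (-(x * s)) ≤ 1 := Real.exp_le_one_iff.2 (by nlinarith [mem_Ioi.1 hx])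
  exact mul_nonneg (by linarith) (Real.rpow_nonneg (le_of_lt hx) _)

lemma L2int (κ s : ℝ) (hκ0 : 0 < κ) (hκ1 : κ < 1) (hs : 0 < s) :
    IntegrableOn (fun x : ℝ => (1 - Real.exp (-(x * s))) * x ^ (-κ - 1)) (Ioi 0) := by
  refine ⟨(by fun_prop : Measurable fun x : ℝ =>
    (1 - Real.exp (-(x * s))) * x ^ (-κ - 1)).aestronglyMeasurable, ?_⟩
  rw [hasFiniteIntegral_iff_ofReal (L2nonneg κ s hs), L2' κ s hκ0 hκ1 hs]
  exact ENNReal.ofReal_lt_top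

lemma L2B (κ s : ℝ) (hκ0 : 0 < κ) (hκ1 : κ < 1) (hs : 0 < s) :
    ∫ x in Ioi (0:ℝ), (1 - Real.exp (-(x * s))) * x ^ (-κ - 1)
      = Real.Gamma (1 - κ) / κ * s ^ κ := by
  rw [integral_eq_lintegral_of_nonneg_ae (L2nonneg κ s hs)
    (by fun_prop : Measurable fun x : ℝ =>
      (1 - Real.exp (-(x * s))) * x ^ (-κ - 1)).aestronglyMeasurable,
    L2' κ s hκ0 hκ1 hs, ENNReal.toReal_ofReal]
  exact mul_nonneg (div_nonneg (Real.Gamma_pos_of_pos (by linarith)).le hκ0.le)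
    (Real.rpow_nonneg hs.le _)

lemma rpow_image (α : ℝ) (hα : 0 < α) : (fun x : ℝ => x ^ α) '' Ioi 0 = Ioi 0 := by
  ext x
  constructor
  · rintro ⟨y, hy, rfl⟩; exact Real.rpow_pos_of_pos hy α
  · intro hx
    refine ⟨x ^ (1/α), Real.rpow_pos_of_pos hx _, ?_⟩
    show (x ^ (1/α)) ^ α = x
    rw [← Real.rpow_mul (le_of_lt hx), one_div_mul_cancel hα.ne', Real.rpow_one]

lemma rpow_deriv (α : ℝ) : ∀ x ∈ Ioi (0:ℝ),
    HasDerivWithinAt (fun t : ℝ => t ^ α) (α * x ^ (α - 1)) (Ioi 0) x := fun x hx =>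
  (Real.hasDerivAt_rpow_const (Or.inl (mem_Ioi.mp hx).ne')).hasDerivWithinAt

lemma rpow_injOn (α : ℝ) (hα : 0 < α) : InjOn (fun x : ℝ => x ^ α) (Ioi 0) :=
  fun x hx y hy hxy => by
    have := Real.rpow_natCast -- dummy
    have h := Real.rpow_left_injOn (x := α) hα.ne'
    exact h (le_of_lt hx : (0:ℝ) ≤ x) (le_of_lt hy : (0:ℝ) ≤ y) hxy

lemma L3step (α t κ : ℝ) (hα : 0 < α) : ∀ x ∈ Ioi (0:ℝ),
    (1 - Real.exp (-(x ^ α * t))) * x ^ (-κ - 1)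
      = (α * x ^ (α - 1)) • ((1/α) * ((1 - Real.exp (-(x ^ α * t))) * (x ^ α) ^ (-(κ/α) - 1))) := by
  intro x hx
  have hx0 : (0:ℝ) < x := hx
  have e1 : (x ^ α) ^ (-(κ/α) - 1) = x ^ (-κ - α) := by
    rw [← Real.rpow_mul hx0.le]
    congr 1
    field_simp
  rw [smul_eq_mul, e1, show (-κ - 1 : ℝ) = (α - 1) + (-κ - α) by ring, Real.rpow_add hx0]
  field_simp

lemma L3B (α t κ : ℝ) (hα : 0 < α) (hα1 : α < 1) (ht : 0 < t) (hκ0 : 0 < κ) (hκα : κ < α) :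
    ∫ x in Ioi (0:ℝ), (1 - Real.exp (-(x ^ α * t))) * x ^ (-κ - 1)
      = t ^ (κ/α) * (Real.Gamma (1 - κ/α) / κ) := by
  have hκ'0 : 0 < κ/α := div_pos hκ0 hα
  have hκ'1 : κ/α < 1 := (div_lt_one hα).2 hκα
  rw [setIntegral_congr_fun measurableSet_Ioi (L3step α t κ hα)]
  rw [integral_comp_rpow_Ioi_of_pos hα
    (g := fun y => (1/α) * ((1 - Real.exp (-(y * t))) * y ^ (-(κ/α) - 1)))]
  rw [MeasureTheory.integral_const_mul, L2B (κ/α) t hκ'0 hκ'1 ht]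
  field_simp

lemma L3int (α t κ : ℝ) (hα : 0 < α) (hα1 : α < 1) (ht : 0 < t) (hκ0 : 0 < κ) (hκα : κ < α) :
    IntegrableOn (fun x : ℝ => (1 - Real.exp (-(x ^ α * t))) * x ^ (-κ - 1)) (Ioi 0) := by
  have hκ'0 : 0 < κ/α := div_pos hκ0 hα
  have hκ'1 : κ/α < 1 := (div_lt_one hα).2 hκα
  have h1 : IntegrableOn (fun y : ℝ => (1 - Real.exp (-(y * t))) * y ^ (-(κ/α) - 1))
      ((fun x : ℝ => x ^ α) '' Ioi 0) := by
    rw [rpow_image α hα]; exact L2int (κ/α) t hκ'0 hκ'1 ht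
  rw [integrableOn_image_iff_integrableOn_abs_deriv_smul measurableSet_Ioi
    (rpow_deriv α) (rpow_injOn α hα)] at h1
  have h2 := h1.const_mul (1/α)
  refine MeasureTheory.IntegrableOn.congr_fun h2 (fun x hx => ?_) measurableSet_Ioi
  have hx0 : (0:ℝ) < x := hx
  rw [L3step α t κ hα x hx, smul_eq_mul, smul_eq_mul,
    abs_of_nonneg (by positivity : (0:ℝ) ≤ α * x ^ (α - 1))]
  ring

lemma L3' (α t κ : ℝ) (hα : 0 < α) (hα1 : α < 1) (ht : 0 < t) (hκ0 : 0 < κ) (hκα : κ < α) :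
    ∫⁻ x in Ioi (0:ℝ), ENNReal.ofReal ((1 - Real.exp (-(x ^ α * t))) * x ^ (-κ - 1))
      = ENNReal.ofReal (t ^ (κ/α) * (Real.Gamma (1 - κ/α) / κ)) := by
  rw [← ofReal_integral_eq_lintegral_ofReal (L3int α t κ hα hα1 ht hκ0 hκα) ?_,
    L3B α t κ hα hα1 ht hκ0 hκα]
  refine (ae_restrict_iff' measurableSet_Ioi).2 (Filter.Eventually.of_forall fun x hx => ?_)
  have hx0 : (0:ℝ) < x := hx
  have h1 : Real.exp (-(x ^ α * t)) ≤ 1 := Real.exp_le_one_iff.2 (by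
    have := Real.rpow_pos_of_pos hx0 α; nlinarith)
  exact mul_nonneg (by linarith) (Real.rpow_nonneg hx0.le _)

/-- Positive moments of order κ < α of the time-t law of an α-stable subordinator. -/
theorem stmt3 (α t : ℝ) (hα : 0 < α) (hα1 : α < 1) (ht : 0 < t)
    (μ : Measure ℝ) [IsProbabilityMeasure μ] (hsupp : μ (Set.Iic 0) = 0)
    (hlap : ∀ x : ℝ, 0 < x → ∫ s, Real.exp (-x * s) ∂μ = Real.exp (-t * x ^ α))
    (κ : ℝ) (hκ0 : 0 < κ) (hκα : κ < α) :
    ∫ s, s ^ κ ∂μ = t ^ (κ / α) * (Real.Gamma (1 - κ / α) / Real.Gamma (1 - κ)) := by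
  have hκ1 : κ < 1 := hκα.trans hα1
  have hκ'1 : κ / α < 1 := (div_lt_one hα).2 hκα
  have hΓ : 0 < Real.Gamma (1 - κ) := Real.Gamma_pos_of_pos (by linarith)
  have hΓ' : 0 < Real.Gamma (1 - κ / α) := Real.Gamma_pos_of_pos (by linarith)
  have hae : ∀ᵐ s ∂μ, 0 < s := by
    rw [ae_iff]
    have hset : {s : ℝ | ¬ 0 < s} = Iic 0 := by ext; simp [not_lt]
    rw [hset]; exact hsupp
  have hexp : ∀ x : ℝ, 0 < x → Integrable (fun s => Real.exp (-(x * s))) μ := by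
    intro x hx
    refine Integrable.mono' (integrable_const 1)
      ((by fun_prop : Measurable fun s : ℝ => Real.exp (-(x * s))).aestronglyMeasurable) ?_
    filter_upwards [hae] with s hs
    rw [Real.norm_eq_abs, Real.abs_exp]
    exact Real.exp_le_one_iff.2 (by nlinarith)
  have bstep : ∀ x ∈ Ioi (0:ℝ),
      ∫⁻ s, ENNReal.ofReal ((1 - Real.exp (-(x * s))) * x ^ (-κ - 1)) ∂μ
        = ENNReal.ofReal ((1 - Real.exp (-(x ^ α * t))) * x ^ (-κ - 1)) := by
    intro x hx
    have hx0 : (0:ℝ) < x := hx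
    have h1 : ∀ s : ℝ, ENNReal.ofReal ((1 - Real.exp (-(x * s))) * x ^ (-κ - 1))
        = ENNReal.ofReal (x ^ (-κ - 1)) * ENNReal.ofReal (1 - Real.exp (-(x * s))) := by
      intro s
      rw [mul_comm, ENNReal.ofReal_mul (Real.rpow_nonneg hx0.le _)]
    simp_rw [h1]
    have nn : 0 ≤ᵐ[μ] ((fun _ => (1:ℝ)) - fun s => Real.exp (-(x * s))) := by
      filter_upwards [hae] with s hs
      have hle : Real.exp (-(x * s)) ≤ 1 := Real.exp_le_one_iff.2 (by nlinarith)
      simp only [Pi.sub_apply, Pi.zero_apply]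
      linarith
    have h2 := ofReal_integral_eq_lintegral_ofReal
      ((integrable_const (1:ℝ)).sub (hexp x hx0)) nn
    simp only [Pi.sub_apply] at h2
    rw [lintegral_const_mul' _ _ ENNReal.ofReal_ne_top, ← h2]
    rw [integral_sub (integrable_const 1) (hexp x hx0), integral_const, probReal_univ,
      smul_eq_mul, mul_one]
    have hl := hlap x hx0
    simp_rw [neg_mul] at hl
    rw [hl, ← ENNReal.ofReal_mul (Real.rpow_nonneg hx0.le _), mul_comm]
    congr 3
    ring
  have main : ∫⁻ s, ENNReal.ofReal (s ^ κ) ∂μ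
      = ENNReal.ofReal (t ^ (κ / α) * (Real.Gamma (1 - κ / α) / Real.Gamma (1 - κ))) := by
    have h3 : (fun s : ℝ => ENNReal.ofReal (s ^ κ)) =ᵐ[μ]
        (fun s : ℝ => ENNReal.ofReal (κ / Real.Gamma (1 - κ)) *
            ∫⁻ x in Ioi (0:ℝ), ENNReal.ofReal ((1 - Real.exp (-(x * s))) * x ^ (-κ - 1))) := by
      filter_upwards [hae] with s hs
      rw [L2' κ s hκ0 hκ1 hs, ← ENNReal.ofReal_mul (div_nonneg hκ0.le hΓ.le)]
      congr 1
      field_simp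
    have e1 := lintegral_congr_ae h3
    have e2 : ∫⁻ x in Ioi (0:ℝ),
        ∫⁻ s, ENNReal.ofReal ((1 - Real.exp (-(x * s))) * x ^ (-κ - 1)) ∂μ
          = ENNReal.ofReal (t ^ (κ / α) * (Real.Gamma (1 - κ / α) / κ)) := by
      rw [setLIntegral_congr_fun measurableSet_Ioi bstep,
        L3' α t κ hα hα1 ht hκ0 hκα]
    have eswap : (∫⁻ s, (∫⁻ x in Ioi (0:ℝ),
          ENNReal.ofReal ((1 - Real.exp (-(x * s))) * x ^ (-κ - 1))) ∂μ)
        = ∫⁻ x in Ioi (0:ℝ),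
            ∫⁻ s, ENNReal.ofReal ((1 - Real.exp (-(x * s))) * x ^ (-κ - 1)) ∂μ :=
      lintegral_lintegral_swap (μ := μ) (ν := volume.restrict (Ioi 0))
        (f := fun s x => ENNReal.ofReal ((1 - Real.exp (-(x * s))) * x ^ (-κ - 1)))
        (by fun_prop)
    rw [e1, lintegral_const_mul' _ _ ENNReal.ofReal_ne_top, eswap, e2,
      ← ENNReal.ofReal_mul (div_nonneg hκ0.le hΓ.le)]
    congr 1
    field_simp
  have hnn : 0 ≤ᵐ[μ] fun s => s ^ κ := by
    filter_upwards [hae] with s hs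
    exact Real.rpow_nonneg hs.le _
  rw [integral_eq_lintegral_of_nonneg_ae hnn
    ((by fun_prop : Measurable fun s : ℝ => s ^ κ).aestronglyMeasurable), main,
    ENNReal.toReal_ofReal
      (mul_nonneg (Real.rpow_nonneg ht.le _) (div_nonneg hΓ'.le hΓ.le))]
end

section
/- Let f : (0,∞) → (0,∞) be continuous, strictly increasing with f(0+)=0 and f(∞)=∞, and suppose f^{-1}(2y) ≤ c·f^{-1}(y) for all y ≥ 1 and some constant c ≥ 1. Let S_t > 0 satisfy E[e^{-xS_t}] = e^{-t f(x)}. Then for r > 0 and 0 < t ≤ 1: (1/(3Γ(1+r)))·[f^{-1}(1/t)]^r ≤ E[S_t^{-r}] ≤ (C/Γ(1+r))·[f^{-1}(1/t)]^r, where C = 1 + Σ_{n=0}^∞ e^{-2^n} c^{(n+1)r} < ∞. -/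
open Real MeasureTheory

/-- Two-sided bounds for negative moments of a subordinator in terms of the inverse
of its Bernstein function, under a doubling condition on the inverse. -/
theorem stmt14 {Ω : Type*} [MeasureSpace Ω] (P : Measure Ω) [IsProbabilityMeasure P]
    (f g : ℝ → ℝ)
    (hfcont : ContinuousOn f (Set.Ioi 0)) (hfmono : StrictMonoOn f (Set.Ioi 0))
    (hf0 : Filter.Tendsto f (nhdsWithin 0 (Set.Ioi 0)) (nhds 0))
    (hfinf : Filter.Tendsto f Filter.atTop Filter.atTop)
    (hinv1 : ∀ y, 0 < y → f (g y) = y) (hinv2 : ∀ x, 0 < x → g (f x) = x)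
    (c : ℝ) (hc : 1 ≤ c) (hdbl : ∀ y, 1 ≤ y → g (2 * y) ≤ c * g y)
    (S : ℝ → Ω → ℝ) (hpos : ∀ t ω, 0 < t → 0 < S t ω)
    (hlap : ∀ x : ℝ, 0 < x → ∀ t : ℝ, 0 < t →
      ∫ ω, Real.exp (-x * S t ω) ∂P = Real.exp (-t * f x))
    (r t : ℝ) (hr : 0 < r) (ht0 : 0 < t) (ht1 : t ≤ 1) :
    Integrable (fun ω => (S t ω) ^ (-r)) P ∧
    (1 / (3 * Real.Gamma (1 + r))) * (g (1 / t)) ^ r ≤ ∫ ω, (S t ω) ^ (-r) ∂P ∧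
    (∫ ω, (S t ω) ^ (-r) ∂P)
      ≤ ((1 + ∑' m : ℕ, Real.exp (-(2:ℝ) ^ m) * c ^ (((m : ℝ) + 1) * r))
          / Real.Gamma (1 + r)) * (g (1 / t)) ^ r := by
  classical
  have hc0 : (0:ℝ) < c := lt_of_lt_of_le one_pos hc
  have hrt : (0:ℝ) < 1 / t := by positivity
  have hGamPos : 0 < Real.Gamma r := Real.Gamma_pos_of_pos hr
  -- positivity of f on (0,∞)
  have hfpos : ∀ x : ℝ, 0 < x → 0 < f x := by
    intro x hx
    have h2 : (0:ℝ) < x / 2 := by linarith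
    have hle : 0 ≤ f (x / 2) := by
      refine le_of_tendsto hf0 ?_
      filter_upwards [self_mem_nhdsWithin, mem_nhdsWithin_of_mem_nhds (Iio_mem_nhds h2)]
        with u hu1 hu2
      exact (hfmono hu1 (Set.mem_Ioi.2 h2) hu2).le
    have := hfmono (Set.mem_Ioi.2 h2) (Set.mem_Ioi.2 hx) (by linarith)
    linarith
  -- positivity of g on (0,∞)
  have hgpos : ∀ y : ℝ, 0 < y → 0 < g y := by
    intro y hy
    obtain ⟨x1, hx1y, hx1pos⟩ :=
      ((hf0.eventually (eventually_lt_nhds hy)).and self_mem_nhdsWithin).exists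
    obtain ⟨x2, hx2y, hx2ge⟩ :=
      ((hfinf.eventually_gt_atTop y).and (Filter.eventually_ge_atTop x1)).exists
    have hx1x2 : x1 ≤ x2 := hx2ge
    have hsub : Set.Icc x1 x2 ⊆ Set.Ioi 0 := fun z hz => lt_of_lt_of_le hx1pos hz.1
    obtain ⟨z, hz, hfz⟩ := intermediate_value_Icc hx1x2 (hfcont.mono hsub)
      (Set.mem_Icc.2 ⟨hx1y.le, hx2y.le⟩)
    have hzpos : 0 < z := lt_of_lt_of_le hx1pos hz.1
    have : g y = z := by rw [← hfz, hinv2 z hzpos]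
    rw [this]; exact hzpos
  -- monotonicity of g on (0,∞)
  have hgmono : ∀ y₁ y₂ : ℝ, 0 < y₁ → y₁ ≤ y₂ → g y₁ ≤ g y₂ := by
    intro y₁ y₂ hy₁ hle
    by_contra hlt
    push_neg at hlt
    have hy₂ : 0 < y₂ := lt_of_lt_of_le hy₁ hle
    have := hfmono (Set.mem_Ioi.2 (hgpos y₂ hy₂)) (Set.mem_Ioi.2 (hgpos y₁ hy₁)) hlt
    rw [hinv1 _ hy₂, hinv1 _ hy₁] at this
    linarith
  set G := g (1 / t) with hGdef
  have hGpos : 0 < G := hgpos _ hrt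
  -- the dyadic sequence
  set a : ℕ → ℝ := fun n => g ((2:ℝ) ^ n / t) with ha_def
  have hapos : ∀ n, 0 < a n := fun n => hgpos _ (by positivity)
  have ha0 : a 0 = G := by simp [ha_def, hGdef]
  have h2nt : ∀ n : ℕ, (1:ℝ) ≤ (2:ℝ) ^ n / t := by
    intro n
    rw [le_div_iff₀ ht0, one_mul]
    exact le_trans ht1 (one_le_pow₀ one_le_two)
  have han : ∀ n : ℕ, a n ≤ c ^ n * G := by
    intro n
    induction n with
    | zero => simp [ha0]
    | succ n ih =>
      have h1 : a (n + 1) = g (2 * ((2:ℝ) ^ n / t)) := by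
        simp only [ha_def]; ring_nf
      have h2 : g (2 * ((2:ℝ) ^ n / t)) ≤ c * g ((2:ℝ) ^ n / t) := hdbl _ (h2nt n)
      have h3 : c * g ((2:ℝ) ^ n / t) ≤ c * (c ^ n * G) :=
        mul_le_mul_of_nonneg_left ih hc0.le
      calc a (n + 1) = g (2 * ((2:ℝ) ^ n / t)) := h1
        _ ≤ c * (c ^ n * G) := le_trans h2 h3
        _ = c ^ (n + 1) * G := by ring
  have hfx_on : ∀ (n : ℕ) (x : ℝ), a n < x → (2:ℝ) ^ n / t < f x := by
    intro n x hx
    have h := hfmono (Set.mem_Ioi.2 (hapos n)) (Set.mem_Ioi.2 (lt_trans (hapos n) hx)) hx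
    rwa [hinv1 _ (by positivity)] at h
  -- measurability of S t
  have hI1 : Integrable (fun ω => Real.exp (-1 * S t ω)) P := by
    by_contra hni
    have h0 := integral_undef hni
    rw [hlap 1 one_pos t ht0] at h0
    exact (Real.exp_pos _).ne' h0
  have hSmeas : AEMeasurable (S t) P := by
    have h1 : AEMeasurable (fun ω => Real.exp (-1 * S t ω)) P := hI1.aemeasurable
    have h2 : AEMeasurable (fun ω => -Real.log (Real.exp (-1 * S t ω))) P :=
      (Real.measurable_log.comp_aemeasurable h1).neg
    refine h2.congr (Filter.Eventually.of_forall fun ω => ?_)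
    simp [Real.log_exp]
  have hIntExp : ∀ x : ℝ, 0 < x → Integrable (fun ω => Real.exp (-x * S t ω)) P := by
    intro x hx
    refine Integrable.mono' (integrable_const 1)
      ((Real.measurable_exp.comp_aemeasurable (hSmeas.const_mul (-x))).aestronglyMeasurable)
      (Filter.Eventually.of_forall fun ω => ?_)
    rw [Real.norm_eq_abs, Real.abs_exp]
    exact Real.exp_le_one_iff.2 (by nlinarith [hpos t ω ht0])
  -- gamma integral identity, lintegral form
  have hGam : ∀ s : ℝ, 0 < s →
      (∫⁻ x in Set.Ioi (0:ℝ), ENNReal.ofReal (x ^ (r - 1) * Real.exp (-(s * x))))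
        = ENNReal.ofReal (Real.Gamma r * s ^ (-r)) := by
    intro s hs
    have h1 := ProbabilityTheory.lintegral_gammaPDF_eq_one hr hs
    rw [← lintegral_add_compl _ (measurableSet_Ici (a := (0:ℝ))), Set.compl_Ici,
      ProbabilityTheory.lintegral_gammaPDF_of_nonpos le_rfl, add_zero,
      ← Measure.restrict_congr_set Ioi_ae_eq_Ici] at h1
    have h2 : (∫⁻ x in Set.Ioi (0:ℝ), ProbabilityTheory.gammaPDF r s x)
        = ENNReal.ofReal (s ^ r / Real.Gamma r)
          * ∫⁻ x in Set.Ioi (0:ℝ), ENNReal.ofReal (x ^ (r - 1) * Real.exp (-(s * x))) := by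
      rw [← lintegral_const_mul' _ _ ENNReal.ofReal_ne_top]
      refine setLIntegral_congr_fun measurableSet_Ioi
        (fun x hx => ?_)
      rw [ProbabilityTheory.gammaPDF_of_nonneg (le_of_lt hx), mul_assoc,
        ENNReal.ofReal_mul (by positivity)]
    rw [h2] at h1
    have hcne : ENNReal.ofReal (s ^ r / Real.Gamma r) ≠ 0 := by
      rw [ne_eq, ENNReal.ofReal_eq_zero, not_le]
      positivity
    have hX : (∫⁻ x in Set.Ioi (0:ℝ), ENNReal.ofReal (x ^ (r - 1) * Real.exp (-(s * x))))
        = (ENNReal.ofReal (s ^ r / Real.Gamma r))⁻¹ := by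
      rw [← one_mul (∫⁻ x in Set.Ioi (0:ℝ), ENNReal.ofReal (x ^ (r - 1) * Real.exp (-(s * x)))),
        ← ENNReal.inv_mul_cancel hcne ENNReal.ofReal_ne_top, mul_assoc, h1, mul_one]
    rw [hX, ← ENNReal.ofReal_inv_of_pos (by positivity)]
    congr 1
    rw [Real.rpow_neg hs.le, inv_div, div_eq_mul_inv]
  -- the two lintegrals
  set L := ∫⁻ ω, ENNReal.ofReal (S t ω ^ (-r)) ∂P with hLdef
  set I := ∫⁻ x in Set.Ioi (0:ℝ), ENNReal.ofReal (x ^ (r - 1) * Real.exp (-t * f x)) with hIdef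
  have key : ENNReal.ofReal (Real.Gamma r) * L = I := by
    have step1 : ENNReal.ofReal (Real.Gamma r) * L
        = ∫⁻ ω, ∫⁻ x in Set.Ioi (0:ℝ),
            ENNReal.ofReal (x ^ (r - 1) * Real.exp (-(S t ω * x))) ∂volume ∂P := by
      rw [hLdef, ← lintegral_const_mul' _ _ ENNReal.ofReal_ne_top]
      refine lintegral_congr fun ω => ?_
      rw [hGam (S t ω) (hpos t ω ht0), ← ENNReal.ofReal_mul hGamPos.le]
    have step2 : (∫⁻ ω, ∫⁻ x in Set.Ioi (0:ℝ),
            ENNReal.ofReal (x ^ (r - 1) * Real.exp (-(S t ω * x))) ∂volume ∂P)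
        = ∫⁻ x in Set.Ioi (0:ℝ), ∫⁻ ω,
            ENNReal.ofReal (x ^ (r - 1) * Real.exp (-(S t ω * x))) ∂P ∂volume := by
      apply lintegral_lintegral_swap
      apply ENNReal.measurable_ofReal.comp_aemeasurable
      apply AEMeasurable.mul
      · exact ((measurable_id.pow (measurable_const (a := r - 1)) : Measurable fun y : ℝ => y ^ (r - 1)).comp
          measurable_snd).aemeasurable
      · exact Real.measurable_exp.comp_aemeasurable
          (show AEMeasurable (fun p : Ω × ℝ => -(S t p.1 * p.2)) (P.prod (volume.restrict (Set.Ioi (0:ℝ)))) from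
            ((hSmeas.comp_fst (ν := volume.restrict (Set.Ioi (0:ℝ)))).mul measurable_snd.aemeasurable).neg)
    rw [step1, step2, hIdef]
    refine setLIntegral_congr_fun measurableSet_Ioi
      (fun x hx => ?_)
    have hx0 : (0:ℝ) < x := hx
    have e1 : ∀ ω, ENNReal.ofReal (x ^ (r - 1) * Real.exp (-(S t ω * x)))
        = ENNReal.ofReal (x ^ (r - 1)) * ENNReal.ofReal (Real.exp (-x * S t ω)) := by
      intro ω
      rw [← ENNReal.ofReal_mul (by positivity), show -(S t ω * x) = -x * S t ω by ring]
    simp only [e1]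
    rw [lintegral_const_mul' _ _ ENNReal.ofReal_ne_top,
      ← ofReal_integral_eq_lintegral_ofReal (hIntExp x hx0)
        (Filter.Eventually.of_forall fun ω => (Real.exp_pos _).le),
      hlap x hx0 t ht0, ← ENNReal.ofReal_mul (by positivity)]
  -- summability of the series
  set u : ℕ → ℝ := fun m => Real.exp (-(2:ℝ) ^ m) * c ^ (((m : ℝ) + 1) * r) with hu_def
  have hterm : ∀ n : ℕ, 0 < u n := fun n => by
    simp only [hu_def]; positivity
  have hsum : Summable u := by
    refine summable_of_ratio_test_tendsto_lt_one (l := 0) one_pos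
      (Filter.Eventually.of_forall fun n => by
        simp only [Real.norm_eq_abs, ne_eq, abs_eq_zero]
        exact (hterm n).ne') ?_
    have heq : (fun n : ℕ => ‖u (n + 1)‖ / ‖u n‖)
        = fun n : ℕ => Real.exp (-(2:ℝ) ^ n) * c ^ r := by
      funext n
      rw [Real.norm_eq_abs, Real.norm_eq_abs, abs_of_pos (hterm _), abs_of_pos (hterm _)]
      simp only [hu_def]
      push_cast
      rw [div_eq_iff (by positivity : Real.exp (-(2:ℝ) ^ n) * c ^ (((n:ℝ) + 1) * r) ≠ 0),
        show ((n:ℝ) + 1 + 1) * r = ((n:ℝ) + 1) * r + r by ring, Real.rpow_add hc0,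
        show (2:ℝ) ^ (n + 1) = (2:ℝ) ^ n + (2:ℝ) ^ n by ring, neg_add, Real.exp_add]
      ring
    rw [heq]
    have h2 : Filter.Tendsto (fun n : ℕ => -((2:ℝ) ^ n)) Filter.atTop Filter.atBot :=
      (Filter.tendsto_neg_atTop_atBot).comp (tendsto_pow_atTop_atTop_of_one_lt one_lt_two)
    have h3 := (Real.tendsto_exp_atBot.comp h2).mul_const (c ^ r)
    simpa using h3
  have hCnn : 0 ≤ ∑' m, u m := tsum_nonneg fun n => (hterm n).le
  -- the basic rpow lintegral
  have hJ : ∀ b : ℝ, 0 < b →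
      (∫⁻ x in Set.Ioc (0:ℝ) b, ENNReal.ofReal (x ^ (r - 1)))
        = ENNReal.ofReal (b ^ r / r) := by
    intro b hb
    have hint : IntegrableOn (fun x : ℝ => x ^ (r - 1)) (Set.Ioc 0 b) := by
      have h := intervalIntegral.intervalIntegrable_rpow' (a := 0) (b := b) (r := r - 1)
        (by linarith)
      rwa [intervalIntegrable_iff, Set.uIoc_of_le hb.le] at h
    rw [← ofReal_integral_eq_lintegral_ofReal hint ?_]
    · congr 1
      rw [← intervalIntegral.integral_of_le hb.le, integral_rpow (Or.inl (by linarith)),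
        sub_add_cancel, Real.zero_rpow hr.ne', sub_zero]
    · filter_upwards [ae_restrict_mem measurableSet_Ioc] with x hx
      exact Real.rpow_nonneg hx.1.le _
  -- upper bound pieces
  have hUB0 : (∫⁻ x in Set.Ioc (0:ℝ) G, ENNReal.ofReal (x ^ (r - 1) * Real.exp (-t * f x)))
      ≤ ENNReal.ofReal (G ^ r / r) := by
    rw [← hJ G hGpos]
    refine lintegral_mono_ae ?_
    filter_upwards [ae_restrict_mem measurableSet_Ioc] with x hx
    refine ENNReal.ofReal_le_ofReal ?_
    have h1 : Real.exp (-t * f x) ≤ 1 :=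
      Real.exp_le_one_iff.2 (by nlinarith [hfpos x hx.1])
    calc x ^ (r - 1) * Real.exp (-t * f x) ≤ x ^ (r - 1) * 1 :=
          mul_le_mul_of_nonneg_left h1 (Real.rpow_nonneg hx.1.le _)
      _ = x ^ (r - 1) := mul_one _
  have hUBn : ∀ n : ℕ,
      (∫⁻ x in Set.Ioc (a n) (a (n + 1)),
          ENNReal.ofReal (x ^ (r - 1) * Real.exp (-t * f x)))
        ≤ ENNReal.ofReal (u n * (G ^ r / r)) := by
    intro n
    have step1 : (∫⁻ x in Set.Ioc (a n) (a (n + 1)),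
          ENNReal.ofReal (x ^ (r - 1) * Real.exp (-t * f x)))
        ≤ ∫⁻ x in Set.Ioc (a n) (a (n + 1)),
            ENNReal.ofReal (Real.exp (-(2:ℝ) ^ n) * x ^ (r - 1)) := by
      refine lintegral_mono_ae ?_
      filter_upwards [ae_restrict_mem measurableSet_Ioc] with x hx
      refine ENNReal.ofReal_le_ofReal ?_
      have hxpos : 0 < x := lt_trans (hapos n) hx.1
      have hfx : (2:ℝ) ^ n / t < f x := hfx_on n x hx.1
      have hexp : -t * f x ≤ -((2:ℝ) ^ n) := by
        have h := (div_lt_iff₀ ht0).1 hfx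
        nlinarith
      calc x ^ (r - 1) * Real.exp (-t * f x)
          ≤ x ^ (r - 1) * Real.exp (-((2:ℝ) ^ n)) :=
            mul_le_mul_of_nonneg_left (Real.exp_le_exp.2 hexp) (Real.rpow_nonneg hxpos.le _)
        _ = Real.exp (-(2:ℝ) ^ n) * x ^ (r - 1) := mul_comm _ _
    have step2 : (∫⁻ x in Set.Ioc (a n) (a (n + 1)),
          ENNReal.ofReal (Real.exp (-(2:ℝ) ^ n) * x ^ (r - 1)))
        ≤ ∫⁻ x in Set.Ioc (0:ℝ) (a (n + 1)),
            ENNReal.ofReal (Real.exp (-(2:ℝ) ^ n) * x ^ (r - 1)) :=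
      lintegral_mono_set (Set.Ioc_subset_Ioc_left (hapos n).le)
    have step3 : (∫⁻ x in Set.Ioc (0:ℝ) (a (n + 1)),
          ENNReal.ofReal (Real.exp (-(2:ℝ) ^ n) * x ^ (r - 1)))
        = ENNReal.ofReal (Real.exp (-(2:ℝ) ^ n)) * ENNReal.ofReal ((a (n + 1)) ^ r / r) := by
      rw [← hJ _ (hapos (n + 1)), ← lintegral_const_mul' _ _ ENNReal.ofReal_ne_top]
      refine setLIntegral_congr_fun measurableSet_Ioc
        (fun x hx => ?_)
      rw [← ENNReal.ofReal_mul (Real.exp_pos _).le]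
    refine le_trans (le_trans step1 step2) ?_
    rw [step3, ← ENNReal.ofReal_mul (Real.exp_pos _).le]
    refine ENNReal.ofReal_le_ofReal ?_
    have h1 : (a (n + 1)) ^ r ≤ (c ^ (n + 1) * G) ^ r :=
      Real.rpow_le_rpow (hapos (n + 1)).le (han (n + 1)) hr.le
    have h2 : (c ^ (n + 1) * G) ^ r = c ^ (((n:ℝ) + 1) * r) * G ^ r := by
      rw [Real.mul_rpow (by positivity) hGpos.le, ← Real.rpow_natCast c (n + 1),
        ← Real.rpow_mul hc0.le]
      push_cast
      ring_nf
    have h3 : (a (n + 1)) ^ r ≤ c ^ (((n:ℝ) + 1) * r) * G ^ r := h2 ▸ h1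
    calc Real.exp (-(2:ℝ) ^ n) * ((a (n + 1)) ^ r / r)
        ≤ Real.exp (-(2:ℝ) ^ n) * ((c ^ (((n:ℝ) + 1) * r) * G ^ r) / r) :=
          mul_le_mul_of_nonneg_left (by gcongr) (Real.exp_pos _).le
      _ = u n * (G ^ r / r) := by simp only [hu_def]; ring
  -- covering
  have hcover : Set.Ioi (0:ℝ)
      ⊆ Set.Ioc 0 G ∪ ⋃ n : ℕ, Set.Ioc (a n) (a (n + 1)) := by
    intro x hx
    rcases le_or_gt x G with h | h
    · exact Or.inl ⟨hx, h⟩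
    · right
      have hxpos : (0:ℝ) < x := hx
      have hex : ∃ m : ℕ, x ≤ a m := by
        obtain ⟨m, hm⟩ := pow_unbounded_of_one_lt (t * f x) (one_lt_two (α := ℝ))
        refine ⟨m, ?_⟩
        have h1 : f x ≤ (2:ℝ) ^ m / t := by
          rw [le_div_iff₀ ht0]; nlinarith
        have h2 : x = g (f x) := (hinv2 x hxpos).symm
        rw [h2]
        exact hgmono _ _ (hfpos x hxpos) h1
      set k := Nat.find hex with hkdef
      have hk : x ≤ a k := Nat.find_spec hex
      have hk0 : k ≠ 0 := by
        intro h0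
        rw [h0, ha0] at hk
        linarith
      obtain ⟨j, hj⟩ := Nat.exists_eq_succ_of_ne_zero hk0
      have hjlt : a j < x := not_le.1 (Nat.find_min hex (by omega))
      exact Set.mem_iUnion.2 ⟨j, ⟨hjlt, by rw [← Nat.succ_eq_add_one, ← hj]; exact hk⟩⟩
  -- upper bound on I
  have hIub : I ≤ ENNReal.ofReal ((1 + ∑' m, u m) * (G ^ r / r)) := by
    calc I ≤ ∫⁻ x in (Set.Ioc (0:ℝ) G ∪ ⋃ n : ℕ, Set.Ioc (a n) (a (n + 1))),
            ENNReal.ofReal (x ^ (r - 1) * Real.exp (-t * f x)) := by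
          rw [hIdef]; exact lintegral_mono_set hcover
      _ ≤ (∫⁻ x in Set.Ioc (0:ℝ) G, ENNReal.ofReal (x ^ (r - 1) * Real.exp (-t * f x)))
            + ∫⁻ x in ⋃ n : ℕ, Set.Ioc (a n) (a (n + 1)),
                ENNReal.ofReal (x ^ (r - 1) * Real.exp (-t * f x)) :=
          lintegral_union_le _ _ _
      _ ≤ ENNReal.ofReal (G ^ r / r)
            + ∑' n : ℕ, ∫⁻ x in Set.Ioc (a n) (a (n + 1)),
                ENNReal.ofReal (x ^ (r - 1) * Real.exp (-t * f x)) :=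
          add_le_add hUB0 (lintegral_iUnion_le _ _)
      _ ≤ ENNReal.ofReal (G ^ r / r) + ∑' n : ℕ, ENNReal.ofReal (u n * (G ^ r / r)) :=
          add_le_add le_rfl (ENNReal.tsum_le_tsum hUBn)
      _ = ENNReal.ofReal (G ^ r / r) + ENNReal.ofReal (∑' n : ℕ, u n * (G ^ r / r)) := by
          rw [ENNReal.ofReal_tsum_of_nonneg (fun n => by positivity) (hsum.mul_right _)]
      _ = ENNReal.ofReal ((1 + ∑' m, u m) * (G ^ r / r)) := by
          rw [tsum_mul_right, ← ENNReal.ofReal_add (by positivity) (by positivity)]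
          congr 1
          ring
  -- lower bound on I
  have hIlb : ENNReal.ofReal (Real.exp (-1) * (G ^ r / r)) ≤ I := by
    have h2 : (∫⁻ x in Set.Ioc (0:ℝ) G, ENNReal.ofReal (Real.exp (-1) * x ^ (r - 1)))
        = ENNReal.ofReal (Real.exp (-1)) * ENNReal.ofReal (G ^ r / r) := by
      rw [← hJ G hGpos, ← lintegral_const_mul' _ _ ENNReal.ofReal_ne_top]
      refine setLIntegral_congr_fun measurableSet_Ioc
        (fun x hx => ?_)
      rw [← ENNReal.ofReal_mul (Real.exp_pos _).le]
    have h1 : (∫⁻ x in Set.Ioc (0:ℝ) G, ENNReal.ofReal (Real.exp (-1) * x ^ (r - 1)))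
        ≤ ∫⁻ x in Set.Ioc (0:ℝ) G, ENNReal.ofReal (x ^ (r - 1) * Real.exp (-t * f x)) := by
      refine lintegral_mono_ae ?_
      filter_upwards [ae_restrict_mem measurableSet_Ioc] with x hx
      refine ENNReal.ofReal_le_ofReal ?_
      have hfxle : f x ≤ 1 / t := by
        have h := hfmono.monotoneOn (Set.mem_Ioi.2 hx.1) (Set.mem_Ioi.2 hGpos) hx.2
        rwa [hGdef, hinv1 _ hrt] at h
      have hexp : Real.exp (-1) ≤ Real.exp (-t * f x) := by
        refine Real.exp_le_exp.2 ?_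
        have h := mul_le_mul_of_nonneg_left hfxle ht0.le
        rw [mul_one_div, div_self ht0.ne'] at h
        linarith
      calc Real.exp (-1) * x ^ (r - 1) ≤ Real.exp (-t * f x) * x ^ (r - 1) :=
            mul_le_mul_of_nonneg_right hexp (Real.rpow_nonneg hx.1.le _)
        _ = x ^ (r - 1) * Real.exp (-t * f x) := mul_comm _ _
    calc ENNReal.ofReal (Real.exp (-1) * (G ^ r / r))
        = ENNReal.ofReal (Real.exp (-1)) * ENNReal.ofReal (G ^ r / r) :=
          ENNReal.ofReal_mul (Real.exp_pos _).le
      _ = ∫⁻ x in Set.Ioc (0:ℝ) G, ENNReal.ofReal (Real.exp (-1) * x ^ (r - 1)) := h2.symm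
      _ ≤ ∫⁻ x in Set.Ioc (0:ℝ) G, ENNReal.ofReal (x ^ (r - 1) * Real.exp (-t * f x)) := h1
      _ ≤ I := by rw [hIdef]; exact lintegral_mono_set Set.Ioc_subset_Ioi_self
  -- finiteness
  have hMnn : 0 ≤ (1 + ∑' m, u m) * (G ^ r / r) := by positivity
  have hInetop : I ≠ ⊤ := ne_top_of_le_ne_top ENNReal.ofReal_ne_top hIub
  have hGamne : ENNReal.ofReal (Real.Gamma r) ≠ 0 := by
    rw [ne_eq, ENNReal.ofReal_eq_zero, not_le]; exact hGamPos
  have hLne : L ≠ ⊤ := by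
    intro hLtop
    rw [hLtop, ENNReal.mul_top hGamne] at key
    exact hInetop key.symm
  -- measurability, integrability, value of the integral
  have hfnn : ∀ ω, 0 ≤ S t ω ^ (-r) := fun ω => Real.rpow_nonneg (hpos t ω ht0).le _
  have hmeas : AEStronglyMeasurable (fun ω => S t ω ^ (-r)) P :=
    ((measurable_id.pow (measurable_const (a := -r)) : Measurable fun y : ℝ => y ^ (-r)).comp_aemeasurable
      hSmeas).aestronglyMeasurable
  have hInt : Integrable (fun ω => S t ω ^ (-r)) P :=
    ⟨hmeas, (hasFiniteIntegral_iff_ofReal (Filter.Eventually.of_forall hfnn)).2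
      (lt_top_iff_ne_top.2 hLne)⟩
  have hEeq : ∫ ω, S t ω ^ (-r) ∂P = L.toReal := by
    rw [integral_eq_lintegral_of_nonneg_ae (Filter.Eventually.of_forall hfnn) hmeas]
  have hGamE : Real.Gamma r * (∫ ω, S t ω ^ (-r) ∂P) = I.toReal := by
    rw [hEeq, ← ENNReal.toReal_ofReal hGamPos.le, ← ENNReal.toReal_mul, key]
  have hUBfinal : Real.Gamma r * (∫ ω, S t ω ^ (-r) ∂P) ≤ (1 + ∑' m, u m) * (G ^ r / r) := by
    rw [hGamE]
    exact ENNReal.toReal_le_of_le_ofReal hMnn hIub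
  have hLBfinal : Real.exp (-1) * (G ^ r / r) ≤ Real.Gamma r * (∫ ω, S t ω ^ (-r) ∂P) := by
    rw [hGamE]
    exact (ENNReal.ofReal_le_iff_le_toReal hInetop).1 hIlb
  have hG1r : Real.Gamma (1 + r) = r * Real.Gamma r := by
    rw [add_comm, Real.Gamma_add_one hr.ne']
  have hGrnn : (0:ℝ) ≤ G ^ r := Real.rpow_nonneg hGpos.le r
  refine ⟨hInt, ?_, ?_⟩
  · -- lower bound
    have h3 : (1:ℝ) / 3 ≤ Real.exp (-1) := by
      rw [Real.exp_neg, one_div]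
      exact inv_anti₀ (Real.exp_pos 1)
        (Real.exp_one_lt_d9.le.trans (by norm_num))
    have k1 : (1 / 3 : ℝ) * (G ^ r / r) ≤ Real.Gamma r * (∫ ω, S t ω ^ (-r) ∂P) :=
      le_trans (mul_le_mul_of_nonneg_right h3 (by positivity)) hLBfinal
    have k2 := mul_le_mul_of_nonneg_left k1 (by positivity : (0:ℝ) ≤ 3 * r)
    rw [hG1r, div_mul_eq_mul_div, one_mul, div_le_iff₀ (by positivity)]
    calc G ^ r = 3 * r * (1 / 3 * (G ^ r / r)) := by field_simp
      _ ≤ 3 * r * (Real.Gamma r * (∫ ω, S t ω ^ (-r) ∂P)) := k2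
      _ = (∫ ω, S t ω ^ (-r) ∂P) * (3 * (r * Real.Gamma r)) := by ring
  · -- upper bound
    have k3 := mul_le_mul_of_nonneg_left hUBfinal hr.le
    rw [hG1r, div_mul_eq_mul_div, le_div_iff₀ (by positivity)]
    calc (∫ ω, S t ω ^ (-r) ∂P) * (r * Real.Gamma r)
        = r * (Real.Gamma r * (∫ ω, S t ω ^ (-r) ∂P)) := by ring
      _ ≤ r * ((1 + ∑' m, u m) * (G ^ r / r)) := k3
      _ = (1 + ∑' m, u m) * G ^ r := by
          field_simp
end

section
/- For 0 < α < 1, t > 0, and d ≥ 0, the quotient Γ(1+d/(2α))/Γ(1+d/2) · t^{-d/(2α)} tends to ∞ as t → 0 when d > 0, and equals 1 when d = 0; moreover t ↦ t^{-d/(2α)} Γ(1+d/(2α))/Γ(1+d/2) is the exact value of ∫_0^∞ r^{-d/2} μ_t^{(α)}(dr). -/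
open Real MeasureTheory Set Filter

lemma integrable_of_integral_ne_zero' {f : ℝ → ℝ} {ν : Measure ℝ} (h : ∫ x, f x ∂ν ≠ 0) :
    Integrable f ν := by
  by_contra hc
  exact h (integral_undef hc)

lemma moment_aux (α s t : ℝ) (hα : 0 < α) (hs : 0 < s) (ht : 0 < t)
    (ν : Measure ℝ) [IsProbabilityMeasure ν]
    (hsupp : ν (Set.Iic 0) = 0)
    (hlap : ∀ l : ℝ, 0 < l → ∫ r, Real.exp (-l * r) ∂ν = Real.exp (-t * l ^ α)) :
    ∫ r, r ^ (-s) ∂ν = t ^ (-s / α) * ((1 / α) * Real.Gamma (s / α) / Real.Gamma s) := by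
  have hΓs : 0 < Real.Gamma s := Real.Gamma_pos_of_pos hs
  have hΓsα : 0 < Real.Gamma (s / α) := Real.Gamma_pos_of_pos (div_pos hs hα)
  set c := t ^ (-s / α) * (1 / α) * Real.Gamma (s / α) with hc
  have hcpos : 0 < c := by positivity
  -- a.e. positivity
  have hae : ∀ᵐ r ∂ν, 0 < r := by
    rw [ae_iff]
    refine measure_mono_null (fun r hr => ?_) hsupp
    simpa using not_lt.mp hr
  -- value of the inner Gamma-type integral, as a function of r > 0
  have hGa : ∀ r : ℝ, 0 < r →
      ∫ l in Ioi (0:ℝ), l ^ (s - 1) * Real.exp (-(r * l)) = (1 / r) ^ s * Real.Gamma s :=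
    fun r hr => Real.integral_rpow_mul_exp_neg_mul_Ioi hs hr
  -- the final integral value
  have hfin : ∫ l in Ioi (0:ℝ), l ^ (s - 1) * Real.exp (-t * l ^ α) = c := by
    have := integral_rpow_mul_exp_neg_mul_rpow hα (by linarith : (-1:ℝ) < s - 1) ht
    simpa [hc, sub_add_cancel] using this
  -- measurability of the kernel
  have hker : Measurable (fun p : ℝ × ℝ =>
      ENNReal.ofReal (p.2 ^ (s - 1) * Real.exp (-(p.1 * p.2)))) := by
    apply ENNReal.measurable_ofReal.comp
    exact (measurable_snd.pow measurable_const).mul ((measurable_fst.mul measurable_snd).neg.exp)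
  -- step 1 : Bochner → lintegral
  have h1 : ∫ r, r ^ (-s) ∂ν = (∫⁻ r, ENNReal.ofReal (r ^ (-s)) ∂ν).toReal := by
    rw [integral_eq_lintegral_of_nonneg_ae (hae.mono fun r hr => Real.rpow_nonneg hr.le _)
      (measurable_id.pow measurable_const).aestronglyMeasurable]
  -- pointwise Gamma representation in ℝ≥0∞
  have hpt : ∀ r : ℝ, 0 < r → ENNReal.ofReal (r ^ (-s))
      = ENNReal.ofReal (Real.Gamma s)⁻¹ *
        ∫⁻ l in Ioi (0:ℝ), ENNReal.ofReal (l ^ (s - 1) * Real.exp (-(r * l))) := by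
    intro r hr
    have hint : IntegrableOn (fun l => l ^ (s - 1) * Real.exp (-(r * l))) (Ioi (0:ℝ)) := by
      apply integrable_of_integral_ne_zero'
      rw [hGa r hr]
      exact ne_of_gt (by positivity)
    rw [← ofReal_integral_eq_lintegral_ofReal hint
      ((ae_restrict_mem measurableSet_Ioi).mono fun l hl =>
        mul_nonneg (Real.rpow_nonneg (Set.mem_Ioi.mp hl).le _) (Real.exp_nonneg _)), hGa r hr]
    rw [show (1 / r) ^ s * Real.Gamma s = Real.Gamma s * r ^ (-s) by
      rw [one_div, Real.inv_rpow hr.le, ← Real.rpow_neg hr.le, mul_comm]]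
    rw [ENNReal.ofReal_mul hΓs.le, ← mul_assoc, ← ENNReal.ofReal_mul (by positivity),
      inv_mul_cancel₀ hΓs.ne', ENNReal.ofReal_one, one_mul]
  -- inner Laplace step
  have hinner : ∀ l : ℝ, 0 < l →
      ∫⁻ r, ENNReal.ofReal (l ^ (s - 1) * Real.exp (-(r * l))) ∂ν
        = ENNReal.ofReal (l ^ (s - 1) * Real.exp (-t * l ^ α)) := by
    intro l hl
    have hm : Measurable fun r : ℝ => Real.exp (-l * r) :=
      by fun_prop
    have hintexp : Integrable (fun r => Real.exp (-l * r)) ν := by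
      refine Integrable.mono' (integrable_const 1) hm.aestronglyMeasurable ?_
      refine hae.mono fun r hr => ?_
      rw [Real.norm_eq_abs, abs_of_pos (Real.exp_pos _)]
      calc Real.exp (-l * r) ≤ Real.exp 0 :=
            Real.exp_le_exp.mpr (by nlinarith)
        _ = 1 := Real.exp_zero
    have hrw : (fun r => ENNReal.ofReal (l ^ (s - 1) * Real.exp (-(r * l))))
        = fun r => ENNReal.ofReal (l ^ (s - 1)) * ENNReal.ofReal (Real.exp (-l * r)) := by
      funext r
      rw [mul_comm r l, ← neg_mul, ENNReal.ofReal_mul (Real.rpow_nonneg hl.le _)]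
    rw [hrw, lintegral_const_mul' _ _ ENNReal.ofReal_ne_top,
      ← ofReal_integral_eq_lintegral_ofReal hintexp (Filter.Eventually.of_forall fun r => (Real.exp_pos _).le),
      hlap l hl, ← ENNReal.ofReal_mul (Real.rpow_nonneg hl.le _)]
  have hint2 : IntegrableOn (fun l => l ^ (s - 1) * Real.exp (-t * l ^ α)) (Ioi (0:ℝ)) := by
    apply integrable_of_integral_ne_zero'
    rw [hfin]; exact hcpos.ne'
  have key : ∫⁻ r, ENNReal.ofReal (r ^ (-s)) ∂ν
      = ENNReal.ofReal (Real.Gamma s)⁻¹ * ENNReal.ofReal c := by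
    calc ∫⁻ r, ENNReal.ofReal (r ^ (-s)) ∂ν
        = ∫⁻ r, (ENNReal.ofReal (Real.Gamma s)⁻¹ *
            ∫⁻ l in Ioi (0:ℝ), ENNReal.ofReal (l ^ (s - 1) * Real.exp (-(r * l)))) ∂ν :=
          by exact lintegral_congr_ae (hae.mono fun r hr => hpt r hr)
      _ = ENNReal.ofReal (Real.Gamma s)⁻¹ *
            ∫⁻ r, (∫⁻ l in Ioi (0:ℝ), ENNReal.ofReal (l ^ (s - 1) * Real.exp (-(r * l)))) ∂ν :=
          lintegral_const_mul' _ _ ENNReal.ofReal_ne_top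
      _ = ENNReal.ofReal (Real.Gamma s)⁻¹ *
            ∫⁻ l in Ioi (0:ℝ), ∫⁻ r, ENNReal.ofReal (l ^ (s - 1) * Real.exp (-(r * l))) ∂ν := by
          rw [lintegral_lintegral_swap hker.aemeasurable]
      _ = ENNReal.ofReal (Real.Gamma s)⁻¹ *
            ∫⁻ l in Ioi (0:ℝ), ENNReal.ofReal (l ^ (s - 1) * Real.exp (-t * l ^ α)) := by
          congr 1
          exact setLIntegral_congr_fun measurableSet_Ioi (fun l hl => hinner l hl)
      _ = ENNReal.ofReal (Real.Gamma s)⁻¹ * ENNReal.ofReal c := by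
          rw [← ofReal_integral_eq_lintegral_ofReal hint2
            ((ae_restrict_mem measurableSet_Ioi).mono fun l hl =>
              mul_nonneg (Real.rpow_nonneg (Set.mem_Ioi.mp hl).le _) (Real.exp_nonneg _)), hfin]
  rw [h1, key, ← ENNReal.ofReal_mul (by positivity), ENNReal.toReal_ofReal (by positivity), hc]
  field_simp

/-- Behaviour of the subordination constant t^{-d/(2α)} Γ(1+d/(2α))/Γ(1+d/2):
it blows up as t → 0 when d > 0, equals 1 when d = 0, and is the exact value of the
negative moment ∫ r^{-d/2} μ_t^{(α)}(dr) of the α-stable subordinator. -/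
theorem stmt19 (α d : ℝ) (hα : 0 < α) (hα1 : α < 1) (hd : 0 ≤ d)
    (μ : ℝ → Measure ℝ) (hprob : ∀ t, 0 < t → IsProbabilityMeasure (μ t))
    (hsupp : ∀ t, 0 < t → (μ t) (Set.Iic 0) = 0)
    (hlap : ∀ t, 0 < t → ∀ l : ℝ, 0 < l →
      ∫ r, Real.exp (-l * r) ∂(μ t) = Real.exp (-t * l ^ α)) :
    (0 < d → Filter.Tendsto
      (fun t : ℝ => t ^ (-d / (2 * α)) * (Real.Gamma (1 + d / (2 * α)) / Real.Gamma (1 + d / 2)))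
      (nhdsWithin 0 (Set.Ioi 0)) Filter.atTop) ∧
    (d = 0 → ∀ t : ℝ, 0 < t →
      t ^ (-d / (2 * α)) * (Real.Gamma (1 + d / (2 * α)) / Real.Gamma (1 + d / 2)) = 1) ∧
    (∀ t : ℝ, 0 < t →
      ∫ r, r ^ (-d / 2) ∂(μ t)
        = t ^ (-d / (2 * α)) * (Real.Gamma (1 + d / (2 * α)) / Real.Gamma (1 + d / 2))) := by
  refine ⟨?_, ?_, ?_⟩
  · intro hd0
    have hc : 0 < d / (2 * α) := by positivity
    have hC : 0 < Real.Gamma (1 + d / (2 * α)) / Real.Gamma (1 + d / 2) :=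
      div_pos (Real.Gamma_pos_of_pos (by linarith)) (Real.Gamma_pos_of_pos (by linarith))
    have h1 : Filter.Tendsto (fun t : ℝ => t ^ (-d / (2 * α)))
        (nhdsWithin 0 (Set.Ioi 0)) Filter.atTop := by
      refine ((tendsto_rpow_atTop hc).comp tendsto_inv_nhdsGT_zero).congr' ?_
      filter_upwards [self_mem_nhdsWithin] with t ht
      have ht' : (0:ℝ) < t := ht
      rw [Function.comp_apply, Real.inv_rpow ht'.le, ← Real.rpow_neg ht'.le, neg_div]
    exact h1.atTop_mul_const hC
  · intro h0 t ht
    subst h0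
    norm_num [Real.Gamma_one]
  · intro t ht
    haveI := hprob t ht
    rcases eq_or_lt_of_le hd with h0 | h0
    · subst h0
      norm_num [Real.Gamma_one]
    · have key := moment_aux α (d / 2) t hα (by positivity) ht (μ t) (hsupp t ht)
        (fun l hl => hlap t ht l hl)
      have e1 : -d / 2 = -(d / 2) := neg_div _ _
      have e2 : -(d / 2) / α = -d / (2 * α) := by field_simp
      have e3 : (1 / α) * Real.Gamma (d / 2 / α) / Real.Gamma (d / 2)
          = Real.Gamma (1 + d / (2 * α)) / Real.Gamma (1 + d / 2) := by
        have g1 : Real.Gamma (1 + d / (2 * α)) = (d / (2 * α)) * Real.Gamma (d / (2 * α)) := by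
          rw [add_comm, Real.Gamma_add_one (by positivity)]
        have g2 : Real.Gamma (1 + d / 2) = (d / 2) * Real.Gamma (d / 2) := by
          rw [add_comm, Real.Gamma_add_one (by positivity)]
        have g3 : d / 2 / α = d / (2 * α) := by field_simp
        have hΓ : 0 < Real.Gamma (d / 2) := Real.Gamma_pos_of_pos (by positivity)
        rw [g1, g2, g3]
        field_simp
      rw [e1, key, e2, e3]
end
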